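/- Let D be the open unit ball B(0,1) in ℝ², κ > 0, γ > 0. Define the corrected weight 𝐌₀(r) := Z₀⁻¹((1−|r|²)/(1+γ|r|²))^{κ/(2(1+γ))} for r ∈ D, where Z₀ := ∫_D ((1−|s|²)/(1+γ|s|²))^{κ/(2(1+γ))} ds, and let 𝒜(r) := 3|r|² I − 2 r⊗r (a 2×2 symmetric matrix). Then for every r ∈ D: κ·(r/(1−|r|²))·𝐌₀(r) + ∇𝐌₀(r) + γ·𝒜(r)·∇𝐌₀(r) = 0. -/

import Mathlib

open MeasureTheory Real
open scoped RealInnerProductSpace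

noncomputable section

abbrev E2 : Type := EuclideanSpace ℝ (Fin 2)

/-- The corrected weight `𝐌₀(r) = Z₀⁻¹ ((1-|r|²)/(1+γ|r|²))^{κ/(2(1+γ))}` is the
equilibrium density of the FENE drift corrected by the turbulent-stretching matrix
`γ𝒜(r)` with `𝒜(r) = 3|r|² I - 2 r⊗r`:
`κ (r/(1-|r|²)) 𝐌₀(r) + ∇𝐌₀(r) + γ 𝒜(r) ∇𝐌₀(r) = 0` on the open unit ball of ℝ². -/
theorem corrected_weight_equilibrium (κ γ : ℝ) (hκ : 0 < κ) (hγ : 0 < γ)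
    (Z₀ : ℝ) (hZ₀ : Z₀ = ∫ s in Metric.ball (0 : E2) 1,
      ((1 - ‖s‖ ^ 2) / (1 + γ * ‖s‖ ^ 2)) ^ (κ / (2 * (1 + γ))))
    (M₀ : E2 → ℝ) (hM₀ : ∀ r, M₀ r = Z₀⁻¹ *
      ((1 - ‖r‖ ^ 2) / (1 + γ * ‖r‖ ^ 2)) ^ (κ / (2 * (1 + γ)))) :
    ∀ r ∈ Metric.ball (0 : E2) 1,
      (κ * M₀ r / (1 - ‖r‖ ^ 2)) • r + gradient M₀ r
        + γ • ((3 * ‖r‖ ^ 2) • gradient M₀ r - (2 * ⟪r, gradient M₀ r⟫) • r) = 0 := by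
  intro r hr
  set p : ℝ := κ / (2 * (1 + γ)) with hp
  set t : ℝ := ‖r‖ ^ 2 with htdef
  have hrlt : ‖r‖ < 1 := by simpa using hr
  have ht0 : 0 ≤ t := sq_nonneg _
  have ht1 : t < 1 := by
    simpa [htdef] using pow_lt_one₀ (norm_nonneg r) hrlt two_ne_zero
  have h1t : (0:ℝ) < 1 - t := by linarith
  have h1gt : (0:ℝ) < 1 + γ * t := by nlinarith
  have hgpos : (0:ℝ) < (1 - t) / (1 + γ * t) := div_pos h1t h1gt
  have h1γ : (0:ℝ) < 1 + γ := by linarith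
  -- scalar function F with M₀ r = F (‖r‖²)
  set F : ℝ → ℝ := fun s => Z₀⁻¹ * ((1 - s) / (1 + γ * s)) ^ p with hF
  -- derivative of the inner fraction
  have hu : HasDerivAt (fun s : ℝ => (1 - s) / (1 + γ * s))
      (((-1) * (1 + γ * t) - (1 - t) * γ) / (1 + γ * t) ^ 2) t := by
    have h2 : HasDerivAt (fun s : ℝ => 1 + γ * s) γ t := by
      simpa using ((hasDerivAt_id t).const_mul γ).const_add 1
    exact ((hasDerivAt_id t).const_sub 1).div h2 h1gt.ne'
  have hFd : HasDerivAt F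
      (Z₀⁻¹ * ((((-1) * (1 + γ * t) - (1 - t) * γ) / (1 + γ * t) ^ 2) * p *
        ((1 - t) / (1 + γ * t)) ^ (p - 1))) t :=
    (hu.rpow_const (Or.inl hgpos.ne')).const_mul _
  set d : ℝ := Z₀⁻¹ * ((((-1) * (1 + γ * t) - (1 - t) * γ) / (1 + γ * t) ^ 2) * p *
        ((1 - t) / (1 + γ * t)) ^ (p - 1)) with hd
  -- fderiv of ‖·‖²
  have hq : HasFDerivAt (fun x : E2 => ‖x‖ ^ 2) (2 • (innerSL ℝ r)) r := by
    simpa using (hasFDerivAt_id r).norm_sq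
  have hcomp : HasFDerivAt M₀ (d • (2 • (innerSL ℝ r))) r := by
    have : HasFDerivAt (F ∘ fun x : E2 => ‖x‖ ^ 2) (d • (2 • (innerSL ℝ r))) r :=
      hFd.comp_hasFDerivAt r hq
    convert this using 1
    funext x
    simp [hM₀ x, hF, Function.comp]
  set c : ℝ := 2 * d with hc
  have hgrad : gradient M₀ r = c • r := by
    have hG : HasGradientAt M₀ (c • r) r := by
      rw [hasGradientAt_iff_hasFDerivAt]
      refine hcomp.congr_fderiv ?_
      ext y
      simp [InnerProductSpace.toDual_apply_apply, c, real_inner_smul_left, real_inner_smul_right]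
      ring
    exact hG.gradient
  -- the key scalar identity for c
  have hcval : c = -(κ * M₀ r) / ((1 - t) * (1 + γ * t)) := by
    have hsub : ((1 - t) / (1 + γ * t)) ^ (p - 1)
        = ((1 - t) / (1 + γ * t)) ^ p / ((1 - t) / (1 + γ * t)) :=
      Real.rpow_sub_one hgpos.ne' p
    have hpe : κ = 2 * (1 + γ) * p := by
      rw [hp]; field_simp
    rw [hc, hd, hsub, hM₀ r, ← htdef, hpe]
    set X : ℝ := ((1 - t) / (1 + γ * t)) ^ p with hX
    rcases eq_or_ne Z₀ 0 with hZ | hZ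
    · simp [hZ]
    · field_simp
      ring
  rw [hgrad, hcval, real_inner_smul_right, real_inner_self_eq_norm_sq, ← htdef]
  have key : κ * M₀ r / (1 - t) + (-(κ * M₀ r) / ((1 - t) * (1 + γ * t)))
      + γ * (3 * t * (-(κ * M₀ r) / ((1 - t) * (1 + γ * t)))
        - 2 * ((-(κ * M₀ r) / ((1 - t) * (1 + γ * t))) * t)) = 0 := by
    field_simp
    ring
  calc (κ * M₀ r / (1 - t)) • r + (-(κ * M₀ r) / ((1 - t) * (1 + γ * t))) • r
        + γ • ((3 * t) • (-(κ * M₀ r) / ((1 - t) * (1 + γ * t))) • r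
          - (2 * ((-(κ * M₀ r) / ((1 - t) * (1 + γ * t))) * t)) • r)
      = (κ * M₀ r / (1 - t) + (-(κ * M₀ r) / ((1 - t) * (1 + γ * t)))
        + γ * (3 * t * (-(κ * M₀ r) / ((1 - t) * (1 + γ * t)))
          - 2 * ((-(κ * M₀ r) / ((1 - t) * (1 + γ * t))) * t))) • r := by module
    _ = (0:ℝ) • r := by rw [key]
    _ = 0 := zero_smul _ _
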